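/- In ℚ⟦X⟧ one has the composition identity T = C(X·D): the formal power series ∑_{n≥1} t(n)·X^n equals the substitution of X·(∑_{n≥0} d(n)·X^n) into C(x) = ∑_{k≥1} (k^{k−1}/k!)·x^k. Equivalently, for every n ≥ 1, t(n) = ∑_{k=1}^{n} (k^{k−1}/k!) · coeff_{X^n}( (X·D)^k ). -/

import Mathlib

section AbelAux
open Finset Polynomial

lemma alt_sum_choose_pow (n : ℕ) : ∀ j : ℕ, j < n →
    ∑ k ∈ range (n+1), (-1:ℚ)^k * (n.choose k) * (k:ℚ)^j = 0 := by
  induction n with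
  | zero => intro j hj; omega
  | succ m ih =>
    intro j hj
    have hjm : j ≤ m := Nat.lt_succ_iff.mp hj
    have hsplit : ∑ k ∈ range (m+2), (-1:ℚ)^k * ((m+1).choose k) * (k:ℚ)^j
        = (∑ k ∈ range (m+1), (-1:ℚ)^(k+1) * ((m+1).choose (k+1)) * ((k:ℚ)+1)^j)
          + (0:ℚ)^j := by
      rw [Finset.sum_range_succ' (fun k => (-1:ℚ)^k * ((m+1).choose k) * (k:ℚ)^j) (m+1)]
      simp [Nat.choose_zero_right]
    have h1 : ∑ k ∈ range (m+1), (-1:ℚ)^(k+1) * ((m+1).choose (k+1)) * ((k:ℚ)+1)^j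
        = (∑ k ∈ range (m+1), (-1:ℚ)^(k+1) * (m.choose (k+1)) * ((k:ℚ)+1)^j)
          + (∑ k ∈ range (m+1), (-1:ℚ)^(k+1) * (m.choose k) * ((k:ℚ)+1)^j) := by
      rw [← Finset.sum_add_distrib]
      apply Finset.sum_congr rfl
      intro k _
      rw [Nat.choose_succ_succ]
      push_cast
      ring
    have h2 : (∑ k ∈ range (m+1), (-1:ℚ)^(k+1) * (m.choose (k+1)) * ((k:ℚ)+1)^j) + (0:ℚ)^j
        = ∑ k ∈ range (m+1), (-1:ℚ)^k * (m.choose k) * (k:ℚ)^j := by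
      have e1 := Finset.sum_range_succ' (fun k => (-1:ℚ)^k * (m.choose k) * (k:ℚ)^j) (m+1)
      have e2 := Finset.sum_range_succ (fun k => (-1:ℚ)^k * (m.choose k) * (k:ℚ)^j) (m+1)
      rw [e2] at e1
      simp only [Nat.choose_succ_self, Nat.cast_zero, Nat.choose_zero_right, Nat.cast_one,
        Nat.cast_ofNat, mul_zero, zero_mul, add_zero, one_mul, pow_zero, mul_one] at e1
      push_cast at e1
      linarith [e1]
    have h3 : ∑ k ∈ range (m+1), (-1:ℚ)^(k+1) * (m.choose k) * ((k:ℚ)+1)^j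
        = - ∑ i ∈ range (j+1), (j.choose i : ℚ) *
            (∑ k ∈ range (m+1), (-1:ℚ)^k * (m.choose k) * (k:ℚ)^i) := by
      have step1 : ∀ k, (-1:ℚ)^(k+1) * (m.choose k) * ((k:ℚ)+1)^j
          = ∑ i ∈ range (j+1), (-1:ℚ)^(k+1) * (m.choose k) * ((k:ℚ)^i * (j.choose i)) := by
        intro k
        have hb : ((k:ℚ)+1)^j = ∑ i ∈ range (j+1), (k:ℚ)^i * (j.choose i) := by
          rw [add_pow]
          apply Finset.sum_congr rfl
          intro i _
          simp
        rw [hb, Finset.mul_sum]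
      calc ∑ k ∈ range (m+1), (-1:ℚ)^(k+1) * (m.choose k) * ((k:ℚ)+1)^j
          = ∑ k ∈ range (m+1), ∑ i ∈ range (j+1),
              (-1:ℚ)^(k+1) * (m.choose k) * ((k:ℚ)^i * (j.choose i)) :=
            Finset.sum_congr rfl (fun k _ => step1 k)
        _ = ∑ i ∈ range (j+1), ∑ k ∈ range (m+1),
              (-1:ℚ)^(k+1) * (m.choose k) * ((k:ℚ)^i * (j.choose i)) := Finset.sum_comm
        _ = - ∑ i ∈ range (j+1), (j.choose i : ℚ) *
              (∑ k ∈ range (m+1), (-1:ℚ)^k * (m.choose k) * (k:ℚ)^i) := by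
            rw [← Finset.sum_neg_distrib]
            apply Finset.sum_congr rfl
            intro i _
            rw [Finset.mul_sum, ← Finset.sum_neg_distrib]
            apply Finset.sum_congr rfl
            intro k _
            ring
    have h4 : ∑ i ∈ range (j+1), (j.choose i : ℚ) *
            (∑ k ∈ range (m+1), (-1:ℚ)^k * (m.choose k) * (k:ℚ)^i)
        = ∑ k ∈ range (m+1), (-1:ℚ)^k * (m.choose k) * (k:ℚ)^j := by
      rw [Finset.sum_range_succ]
      have hz : ∀ i ∈ range j, (j.choose i : ℚ) *
          (∑ k ∈ range (m+1), (-1:ℚ)^k * (m.choose k) * (k:ℚ)^i) = 0 := by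
        intro i hi
        rw [ih i (lt_of_lt_of_le (Finset.mem_range.mp hi) hjm)]
        ring
      rw [Finset.sum_eq_zero hz]
      simp
    rw [hsplit, h1, h3, h4]
    linarith [h2]

lemma range_succ_eq_insert_Icc (n : ℕ) : range (n+1) = insert 0 (Finset.Icc 1 n) := by
  ext x; simp [Finset.mem_range, Finset.mem_Icc]; omega

lemma Icc_succ_top_insert (n : ℕ) : Finset.Icc 1 (n+1) = insert (n+1) (Finset.Icc 1 n) := by
  ext x; simp [Finset.mem_Icc]; omega

open Polynomial in
noncomputable def abelP (n : ℕ) : Polynomial ℚ :=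
  ∑ k ∈ Finset.Icc 1 n,
    Polynomial.C ((n.choose k : ℚ) * (k:ℚ)^(k-1)) * (Polynomial.X + Polynomial.C ((n:ℚ) - (k:ℚ)))^(n-k)

open Polynomial in
lemma abelP_eq : ∀ n : ℕ, 1 ≤ n → abelP n = C (n:ℚ) * (X + C (n:ℚ))^(n-1) := by
  intro n hn
  induction n, hn using Nat.le_induction with
  | base => simp [abelP]
  | succ m hm ih =>
    have hchoose : ∀ k : ℕ, ((m+1).choose k : ℚ) * ((m:ℚ) + 1 - k) = ((m:ℚ)+1) * (m.choose k) := by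
      intro k
      by_cases hk : k ≤ m + 1
      · have h1 : (m+1).choose k * (m+1-k) = (m+1) * m.choose k := by
          rw [← Nat.choose_succ_right_eq, ← Nat.add_one_mul_choose_eq]
        have hc : ((m+1-k : ℕ) : ℚ) = (m:ℚ) + 1 - k := by
          push_cast [Nat.cast_sub hk]; ring
        calc ((m+1).choose k : ℚ) * ((m:ℚ) + 1 - k)
            = ((m+1).choose k : ℚ) * ((m+1-k : ℕ) : ℚ) := by rw [hc]
          _ = (((m+1).choose k * (m+1-k) : ℕ) : ℚ) := by push_cast; ring
          _ = (((m+1) * m.choose k : ℕ) : ℚ) := by rw [h1]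
          _ = ((m:ℚ)+1) * (m.choose k) := by push_cast; ring
      · have h1 : (m+1).choose k = 0 := Nat.choose_eq_zero_of_lt (by omega)
        have h2 : m.choose k = 0 := Nat.choose_eq_zero_of_lt (by omega)
        rw [h1, h2]; simp
    have hder : derivative (abelP (m+1))
        = ∑ k ∈ Finset.Icc 1 (m+1),
            C (((m:ℚ)+1) * (m.choose k) * (k:ℚ)^(k-1)) * (X + C ((m:ℚ)+1-(k:ℚ)))^(m-k) := by
      unfold abelP
      rw [derivative_sum]
      apply Finset.sum_congr rfl
      intro k hk
      obtain ⟨hk1, hk2⟩ := Finset.mem_Icc.mp hk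
      rw [derivative_C_mul, derivative_pow, derivative_add, derivative_X, derivative_C, add_zero,
        mul_one]
      have hcast : (((m+1:ℕ)):ℚ) - (k:ℚ) = (m:ℚ) + 1 - k := by push_cast; ring
      rw [hcast]
      have hexp : m + 1 - k - 1 = m - k := by omega
      rw [hexp]
      have hmk : ((m+1-k : ℕ) : ℚ) = (m:ℚ) + 1 - k := by
        push_cast [Nat.cast_sub hk2]; ring
      rw [hmk, ← mul_assoc, ← C_mul]
      congr 1
      rw [← hchoose k]
      ring
    have hcomp : (abelP m).comp (X + C 1)
        = ∑ k ∈ Finset.Icc 1 m, C ((m.choose k : ℚ) * (k:ℚ)^(k-1)) * (X + C ((m:ℚ)+1-(k:ℚ)))^(m-k) := by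
      unfold abelP
      rw [Polynomial.sum_comp]
      apply Finset.sum_congr rfl
      intro k hk
      rw [mul_comp, pow_comp, C_comp, add_comp, X_comp, C_comp]
      congr 2
      rw [add_assoc, ← C_add]
      congr 1
      ring
    have hder2 : derivative (abelP (m+1)) = C ((m:ℚ)+1) * (abelP m).comp (X + C 1) := by
      rw [hder, hcomp, Finset.mul_sum]
      rw [Icc_succ_top_insert]
      rw [Finset.sum_insert (by simp)]
      have hz : C (((m:ℚ)+1) * (m.choose (m+1)) * ((m+1:ℕ):ℚ)^(m+1-1)) *
          (X + C ((m:ℚ)+1-((m+1:ℕ):ℚ)))^(m-(m+1)) = 0 := by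
        rw [Nat.choose_succ_self]
        simp
      rw [hz, zero_add]
      apply Finset.sum_congr rfl
      intro k hk
      rw [← mul_assoc, ← C_mul, mul_assoc]
    have hrhs : derivative (C ((m:ℚ)+1) * (X + C ((m:ℚ)+1))^((m+1)-1))
        = C ((m:ℚ)+1) * (abelP m).comp (X + C 1) := by
      rw [ih]
      rw [derivative_C_mul, derivative_pow, derivative_add, derivative_X, derivative_C, add_zero,
        mul_one, mul_comp, pow_comp, C_comp, add_comp, X_comp, C_comp]
      have h2 : X + C (1:ℚ) + C ((m:ℚ)) = X + C ((m:ℚ)+1) := by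
        rw [add_assoc, ← C_add, add_comm (1:ℚ)]
      simp only [Nat.add_sub_cancel]
      rw [h2]
    -- difference has zero derivative
    set F := abelP (m+1) - C (((m+1:ℕ)):ℚ) * (X + C (((m+1:ℕ)):ℚ))^((m+1)-1) with hF
    have hdF : derivative F = 0 := by
      rw [hF, derivative_sub, hder2]
      have hc1 : (((m+1:ℕ)):ℚ) = (m:ℚ)+1 := by push_cast; ring
      rw [hc1, hrhs, sub_self]
    have hFC := Polynomial.eq_C_of_derivative_eq_zero hdF
    -- evaluate at -(m+1)
    have hx0 : ∀ k : ℕ, 1 ≤ k → k ≤ m+1 →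
        Polynomial.eval (-((m:ℚ)+1))
          (C (((m+1).choose k : ℚ) * (k:ℚ)^(k-1)) *
            (X + C ((((m+1:ℕ)):ℚ) - (k:ℚ)))^((m+1)-k))
        = (-1:ℚ)^(m+1) * ((-1:ℚ)^k * (((m+1).choose k : ℚ)) * (k:ℚ)^m) := by
      intro k hk1 hk2
      rw [Polynomial.eval_mul, Polynomial.eval_pow, Polynomial.eval_add, Polynomial.eval_C,
        Polynomial.eval_X, Polynomial.eval_C]
      have hbase : -((m:ℚ)+1) + ((((m+1:ℕ)):ℚ) - (k:ℚ)) = -(k:ℚ) := by push_cast; ring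
      rw [hbase]
      have hnp : (-(k:ℚ))^(m+1-k) = (-1:ℚ)^(m+1-k) * (k:ℚ)^(m+1-k) := by
        rw [neg_pow]
      rw [hnp]
      have hsgn : (-1:ℚ)^(m+1-k) = (-1:ℚ)^(m+1) * (-1:ℚ)^k := by
        have h1 : (-1:ℚ)^(m+1-k) * ((-1:ℚ)^k * (-1:ℚ)^k) = (-1:ℚ)^(m+1) * (-1:ℚ)^k := by
          rw [← mul_assoc, ← pow_add, Nat.sub_add_cancel hk2]
        have h2 : (-1:ℚ)^k * (-1:ℚ)^k = 1 := by
          rw [← pow_add, ← two_mul, pow_mul]; norm_num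
        rw [h2, mul_one] at h1
        exact h1
      have hkpow : (k:ℚ)^(k-1) * (k:ℚ)^(m+1-k) = (k:ℚ)^m := by
        rw [← pow_add]
        congr 1
        omega
      calc ((m+1).choose k : ℚ) * (k:ℚ)^(k-1) * ((-1:ℚ)^(m+1-k) * (k:ℚ)^(m+1-k))
          = (-1:ℚ)^(m+1-k) * (((m+1).choose k : ℚ)) * ((k:ℚ)^(k-1) * (k:ℚ)^(m+1-k)) := by ring
        _ = (-1:ℚ)^(m+1-k) * (((m+1).choose k : ℚ)) * (k:ℚ)^m := by rw [hkpow]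
        _ = (-1:ℚ)^(m+1) * ((-1:ℚ)^k * (((m+1).choose k : ℚ)) * (k:ℚ)^m) := by rw [hsgn]; ring
    have heval1 : Polynomial.eval (-((m:ℚ)+1)) (abelP (m+1)) = 0 := by
      unfold abelP
      rw [Polynomial.eval_finset_sum]
      have hsum : ∑ k ∈ Finset.Icc 1 (m+1), Polynomial.eval (-((m:ℚ)+1))
            (C (((m+1).choose k : ℚ) * (k:ℚ)^(k-1)) *
              (X + C ((((m+1:ℕ)):ℚ) - (k:ℚ)))^((m+1)-k))
          = ∑ k ∈ Finset.Icc 1 (m+1),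
              (-1:ℚ)^(m+1) * ((-1:ℚ)^k * (((m+1).choose k : ℚ)) * (k:ℚ)^m) := by
        apply Finset.sum_congr rfl
        intro k hk
        obtain ⟨hk1, hk2⟩ := Finset.mem_Icc.mp hk
        exact hx0 k hk1 hk2
      rw [hsum, ← Finset.mul_sum]
      have hzero : ∑ k ∈ Finset.Icc 1 (m+1), ((-1:ℚ)^k * (((m+1).choose k : ℚ)) * (k:ℚ)^m) = 0 := by
        have hd := alt_sum_choose_pow (m+1) m (by omega)
        rw [range_succ_eq_insert_Icc, Finset.sum_insert (by simp)] at hd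
        have h0 : (-1:ℚ)^0 * (((m+1).choose 0 : ℚ)) * ((0:ℕ):ℚ)^m = 0 := by
          simp [zero_pow (by omega : m ≠ 0)]
        rw [h0, zero_add] at hd
        exact hd
      rw [hzero, mul_zero]
    have heval2 : Polynomial.eval (-((m:ℚ)+1))
        (C (((m+1:ℕ)):ℚ) * (X + C (((m+1:ℕ)):ℚ))^((m+1)-1)) = 0 := by
      simp only [Polynomial.eval_mul, Polynomial.eval_pow, Polynomial.eval_add,
        Polynomial.eval_C, Polynomial.eval_X]
      have h9 : -((m:ℚ)+1) + (((m+1:ℕ)):ℚ) = 0 := by push_cast; ring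
      rw [h9, zero_pow (by omega : m + 1 - 1 ≠ 0), mul_zero]
    have hevalF : Polynomial.eval (-((m:ℚ)+1)) F = 0 := by
      rw [hF, Polynomial.eval_sub, heval1, heval2, sub_self]
    rw [hFC, Polynomial.eval_C] at hevalF
    have hF0 : F = 0 := by rw [hFC, hevalF, map_zero]
    rw [hF] at hF0
    exact sub_eq_zero.mp hF0

lemma choose_shift (M k : ℕ) :
    ((M+1).choose k : ℚ) * ((M:ℚ) + 1 - k) = ((M:ℚ)+1) * (M.choose k) := by
  by_cases hk : k ≤ M + 1
  · have h1 : (M+1).choose k * (M+1-k) = (M+1) * M.choose k := by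
      rw [← Nat.choose_succ_right_eq, ← Nat.add_one_mul_choose_eq]
    have hc : ((M+1-k : ℕ) : ℚ) = (M:ℚ) + 1 - k := by
      push_cast [Nat.cast_sub hk]; ring
    calc ((M+1).choose k : ℚ) * ((M:ℚ) + 1 - k)
        = ((M+1).choose k : ℚ) * ((M+1-k : ℕ) : ℚ) := by rw [hc]
      _ = (((M+1).choose k * (M+1-k) : ℕ) : ℚ) := by push_cast; ring
      _ = (((M+1) * M.choose k : ℕ) : ℚ) := by rw [h1]
      _ = ((M:ℚ)+1) * (M.choose k) := by push_cast; ring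
  · have h1 : (M+1).choose k = 0 := Nat.choose_eq_zero_of_lt (by omega)
    have h2 : M.choose k = 0 := Nat.choose_eq_zero_of_lt (by omega)
    rw [h1, h2]; simp

lemma abel_H (M : ℕ) (hM : 1 ≤ M) :
    ∑ k ∈ Finset.Icc 1 M, ((M+1).choose k : ℚ) * (k:ℚ)^(k-1) * ((M:ℚ)+1-k)^(M+1-k)
      = (M:ℚ) * ((M:ℚ)+1)^M := by
  have h := abelP_eq M hM
  have heval := congrArg (Polynomial.eval (1:ℚ)) h
  simp only [Polynomial.eval_mul, Polynomial.eval_pow, Polynomial.eval_add, Polynomial.eval_C,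
    Polynomial.eval_X] at heval
  unfold abelP at heval
  rw [Polynomial.eval_finset_sum] at heval
  simp only [Polynomial.eval_mul, Polynomial.eval_pow, Polynomial.eval_add, Polynomial.eval_C,
    Polynomial.eval_X] at heval
  have key := congrArg (fun x => ((M:ℚ)+1) * x) heval
  simp only [Finset.mul_sum] at key
  have hL : ∀ k ∈ Finset.Icc 1 M,
      ((M:ℚ)+1) * ((M.choose k : ℚ) * (k:ℚ)^(k-1) * ((1:ℚ) + ((M:ℚ) - k))^(M-k))
      = ((M+1).choose k : ℚ) * (k:ℚ)^(k-1) * ((M:ℚ)+1-k)^(M+1-k) := by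
    intro k hk
    obtain ⟨hk1, hk2⟩ := Finset.mem_Icc.mp hk
    have hbase : (1:ℚ) + ((M:ℚ) - k) = (M:ℚ) + 1 - k := by ring
    have hexp : M + 1 - k = (M - k) + 1 := by omega
    rw [hbase, hexp, pow_succ]
    linear_combination (-((k:ℚ)^(k-1) * ((M:ℚ)+1-(k:ℚ))^(M-k))) * (choose_shift M k)
  rw [Finset.sum_congr rfl hL] at key
  rw [key]
  have hpow : ((1:ℚ) + (M:ℚ))^(M-1) * ((M:ℚ)+1) = ((M:ℚ)+1)^M := by
    rw [add_comm (1:ℚ), ← pow_succ]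
    congr 1
    omega
  calc ((M:ℚ)+1) * ((M:ℚ) * ((1:ℚ)+(M:ℚ))^(M-1))
      = (M:ℚ) * (((1:ℚ)+(M:ℚ))^(M-1) * ((M:ℚ)+1)) := by ring
    _ = (M:ℚ) * ((M:ℚ)+1)^M := by rw [hpow]

noncomputable def cc : ℕ → ℚ := fun k => if k = 0 then 0 else (k:ℚ)^(k-1)/(k.factorial:ℚ)

lemma cc_rec (m : ℕ) :
    ∑ p ∈ Finset.HasAntidiagonal.antidiagonal m, cc p.1 * (p.2:ℚ) * cc p.2 = ((m:ℚ) - 1) * cc m := by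
  rcases Nat.lt_or_ge m 2 with hm | hm
  · interval_cases m
    · simp [cc]
    · simp [Finset.Nat.sum_antidiagonal_eq_sum_range_succ_mk, cc, Finset.sum_range_succ]
  · obtain ⟨M, rfl⟩ : ∃ M, m = M + 1 := ⟨m - 1, by omega⟩
    have hM1 : 1 ≤ M := by omega
    rw [Finset.Nat.sum_antidiagonal_eq_sum_range_succ_mk]
    rw [range_succ_eq_insert_Icc, Finset.sum_insert (by simp)]
    have h0 : cc 0 * ((M+1-0:ℕ):ℚ) * cc (M+1-0) = 0 := by simp [cc]
    rw [h0, zero_add]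
    rw [Icc_succ_top_insert, Finset.sum_insert (by simp)]
    have htop : cc (M+1) * ((M+1-(M+1):ℕ):ℚ) * cc (M+1-(M+1)) = 0 := by simp
    rw [htop, zero_add]
    have hterm : ∀ i ∈ Finset.Icc 1 M, cc i * ((M+1-i:ℕ):ℚ) * cc (M+1-i)
        = ((M+1).choose i : ℚ) * (i:ℚ)^(i-1) * ((M:ℚ)+1-(i:ℚ))^(M+1-i) / ((M+1).factorial : ℚ) := by
      intro i hi
      obtain ⟨hi1, hi2⟩ := Finset.mem_Icc.mp hi
      set j := M + 1 - i with hjdef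
      have hj1 : 1 ≤ j := by omega
      have hij : i + j = M + 1 := by omega
      have hcast : ((j:ℕ):ℚ) = (M:ℚ) + 1 - (i:ℚ) := by
        rw [hjdef]
        push_cast [Nat.cast_sub (by omega : i ≤ M + 1)]
        ring
      have hccj : cc j = (j:ℚ)^(j-1)/(j.factorial:ℚ) := by
        rw [cc]; simp only [if_neg (by omega : ¬ j = 0)]
      have hcci : cc i = (i:ℚ)^(i-1)/(i.factorial:ℚ) := by
        rw [cc]; simp only [if_neg (by omega : ¬ i = 0)]
      have hjj : (j:ℚ) * (j:ℚ)^(j-1) = (j:ℚ)^j := by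
        rw [← pow_succ']
        congr 1
        omega
      have hfac : ((M+1).choose i : ℚ) * (i.factorial:ℚ) * (j.factorial:ℚ) = ((M+1).factorial:ℚ) := by
        have := Nat.choose_mul_factorial_mul_factorial (by omega : i ≤ M + 1)
        have hj' : M + 1 - i = j := rfl
        rw [hj'] at this
        exact_mod_cast this
      have hfi : (i.factorial:ℚ) ≠ 0 := Nat.cast_ne_zero.mpr (Nat.factorial_ne_zero i)
      have hfj : (j.factorial:ℚ) ≠ 0 := Nat.cast_ne_zero.mpr (Nat.factorial_ne_zero j)
      have hfM : (((M+1).factorial:ℕ):ℚ) ≠ 0 := Nat.cast_ne_zero.mpr (Nat.factorial_ne_zero _)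
      rw [hcci, hccj, ← hcast]
      field_simp
      rw [← hfac, ← hjj]
      ring
    rw [Finset.sum_congr rfl hterm]
    rw [← Finset.sum_div]
    rw [abel_H M hM1]
    have hccM : cc (M+1) = ((M+1:ℕ):ℚ)^M / (((M+1).factorial:ℕ):ℚ) := by
      rw [cc]; simp only [if_neg (by omega : ¬ M + 1 = 0), Nat.add_sub_cancel]
    have hc1 : (((M+1):ℕ):ℚ) - 1 = (M:ℚ) := by push_cast; ring
    rw [hccM, hc1]
    have hc2 : (((M+1):ℕ):ℚ) = (M:ℚ) + 1 := by push_cast; ring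
    rw [hc2]
    ring

end AbelAux

open PowerSeries Filter Topology

/-- Composition `f ∘ g` of formal power series (substitution of `g` into `f`), defined
coefficientwise; this is the genuine substitution when `g` has zero constant term. -/
noncomputable def psComp {R : Type*} [CommSemiring R] (f g : PowerSeries R) : PowerSeries R :=
  PowerSeries.mk fun n => ∑ k ∈ Finset.range (n + 1),
    PowerSeries.coeff (R := R) k f * PowerSeries.coeff (R := R) n (g ^ k)

/-- The generating function `C(x) = ∑_{k≥1} (k^{k−1}/k!)·x^k` of `C`-trees. -/
noncomputable def Cseries : PowerSeries ℚ :=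
  PowerSeries.mk fun k => if k = 0 then 0 else (k : ℚ) ^ (k - 1) / (k.factorial : ℚ)


noncomputable def theta (f : PowerSeries ℚ) : PowerSeries ℚ :=
  PowerSeries.mk fun n => (n:ℚ) * PowerSeries.coeff (R := ℚ) n f

lemma coeff_theta (n : ℕ) (f : PowerSeries ℚ) :
    coeff (R := ℚ) n (theta f) = (n:ℚ) * coeff (R := ℚ) n f := coeff_mk _ _

lemma theta_add (f g : PowerSeries ℚ) : theta (f + g) = theta f + theta g := by
  ext n
  simp only [coeff_theta, map_add, coeff_theta]
  ring

lemma theta_sub (f g : PowerSeries ℚ) : theta (f - g) = theta f - theta g := by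
  ext n
  simp only [coeff_theta, map_sub]
  ring

lemma theta_C_mul (a : ℚ) (f : PowerSeries ℚ) : theta (C (R := ℚ) a * f) = C (R := ℚ) a * theta f := by
  ext n
  simp only [coeff_theta, coeff_C_mul]
  ring

lemma theta_mul (f g : PowerSeries ℚ) : theta (f * g) = theta f * g + f * theta g := by
  ext n
  rw [map_add, coeff_theta, PowerSeries.coeff_mul, PowerSeries.coeff_mul, PowerSeries.coeff_mul,
    Finset.mul_sum, ← Finset.sum_add_distrib]
  apply Finset.sum_congr rfl
  intro p hp
  have hps : p.1 + p.2 = n := Finset.HasAntidiagonal.mem_antidiagonal.mp hp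
  rw [coeff_theta, coeff_theta]
  have hc : (n:ℚ) = (p.1:ℚ) + (p.2:ℚ) := by exact_mod_cast hps.symm
  rw [hc]
  ring

lemma theta_X : theta (X : PowerSeries ℚ) = X := by
  ext n
  rw [coeff_theta, PowerSeries.coeff_X]
  by_cases h : n = 1
  · subst h; norm_num
  · simp [h]

lemma theta_sum {s : Finset ℕ} (F : ℕ → PowerSeries ℚ) :
    theta (∑ k ∈ s, F k) = ∑ k ∈ s, theta (F k) := by
  classical
  induction s using Finset.induction_on with
  | empty =>
    ext n
    simp [coeff_theta]
  | insert _ _ h ih =>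
    rw [Finset.sum_insert h, Finset.sum_insert h, theta_add, ih]

lemma coeff_mul_vanish (n : ℕ) (f g : PowerSeries ℚ) (h : ∀ m < n, coeff (R := ℚ) m g = 0) :
    coeff (R := ℚ) n (f * g) = coeff (R := ℚ) 0 f * coeff (R := ℚ) n g := by
  rw [PowerSeries.coeff_mul]
  rw [Finset.sum_eq_single (0, n)]
  · intro p hp hne
    have hps : p.1 + p.2 = n := Finset.HasAntidiagonal.mem_antidiagonal.mp hp
    have h2 : p.2 < n := by
      rcases Nat.lt_or_ge p.2 n with h' | h'
      · exact h'
      · exfalso; apply hne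
        have : p.2 = n := by omega
        have : p.1 = 0 := by omega
        ext <;> simp [*]
    rw [h p.2 h2, mul_zero]
  · intro hn
    exfalso
    exact hn (Finset.HasAntidiagonal.mem_antidiagonal.mpr (by simp))

lemma coeff_zero_mul' (f g : PowerSeries ℚ) : coeff (R := ℚ) 0 (f * g) = coeff (R := ℚ) 0 f * coeff (R := ℚ) 0 g := by
  rw [PowerSeries.coeff_mul]
  simp [Finset.Nat.antidiagonal_zero]

lemma uniq_solution (Ds F G : PowerSeries ℚ)
    (hDs0 : coeff (R := ℚ) 0 Ds = 1)
    (hF : Ds * theta F = Ds * F + F * theta Ds + Ds * F * theta F)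
    (hG : Ds * theta G = Ds * G + G * theta Ds + Ds * G * theta G)
    (hF0 : coeff (R := ℚ) 0 F = 0) (hG0 : coeff (R := ℚ) 0 G = 0)
    (h1 : coeff (R := ℚ) 1 F = coeff (R := ℚ) 1 G) : F = G := by
  have hV : Ds * theta (F - G) = Ds * (F - G) + (F - G) * theta Ds
      + Ds * (F - G) * theta F + Ds * G * theta (F - G) := by
    rw [theta_sub]
    linear_combination hF - hG
  ext n
  induction n using Nat.strong_induction_on with
  | _ n ih =>
    rcases Nat.lt_or_ge n 2 with hn | hn
    · interval_cases n
      · rw [hF0, hG0]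
      · exact h1
    · have hvan : ∀ m < n, coeff (R := ℚ) m (F - G) = 0 := by
        intro m hm
        rw [map_sub, ih m hm, sub_self]
      have hvt : ∀ m < n, coeff (R := ℚ) m (theta (F - G)) = 0 := by
        intro m hm
        rw [coeff_theta, hvan m hm, mul_zero]
      have hcoeff := congrArg (coeff (R := ℚ) n) hV
      rw [map_add, map_add, map_add] at hcoeff
      rw [coeff_mul_vanish n Ds _ hvt] at hcoeff
      rw [coeff_mul_vanish n Ds _ hvan] at hcoeff
      have e2 : coeff (R := ℚ) n ((F - G) * theta Ds) = 0 := by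
        rw [mul_comm, coeff_mul_vanish n _ _ hvan, coeff_theta]
        simp
      have e3 : coeff (R := ℚ) n (Ds * (F - G) * theta F) = 0 := by
        have : Ds * (F - G) * theta F = (Ds * theta F) * (F - G) := by ring
        rw [this, coeff_mul_vanish n _ _ hvan, coeff_zero_mul', coeff_theta]
        simp
      have e4 : coeff (R := ℚ) n (Ds * G * theta (F - G)) = 0 := by
        rw [coeff_mul_vanish n _ _ hvt, coeff_zero_mul', hG0, coeff_theta]
        simp
      rw [e2, e3, e4, coeff_theta, hDs0, one_mul, one_mul, add_zero, add_zero, add_zero] at hcoeff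
      have hsub : ((n:ℚ) - 1) * coeff (R := ℚ) n (F - G) = 0 := by
        rw [sub_mul, hcoeff]
        ring
      have hne : ((n:ℚ) - 1) ≠ 0 := by
        have : (2:ℚ) ≤ (n:ℚ) := by exact_mod_cast hn
        intro h'
        nlinarith
      have := mul_eq_zero.mp hsub
      rcases this with h' | h'
      · exact absurd h' hne
      · rw [map_sub] at h'
        linarith [h']

section Sside

variable (Ds : PowerSeries ℚ)

lemma coeff_u_pow_vanish (k n : ℕ) (h : n < k) : coeff (R := ℚ) n ((X * Ds) ^ k) = 0 := by
  have hdvd : (X : PowerSeries ℚ)^k ∣ (X * Ds)^k := pow_dvd_pow_of_dvd (dvd_mul_right X Ds) k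
  exact PowerSeries.X_pow_dvd_iff.mp hdvd n h

lemma coeff_S_eq (n : ℕ) :
    coeff (R := ℚ) n (psComp Cseries (X * Ds)) = ∑ k ∈ Finset.range (n+1), cc k * coeff (R := ℚ) n ((X * Ds)^k) := by
  rw [psComp, coeff_mk]
  apply Finset.sum_congr rfl
  intro k _
  rw [Cseries, coeff_mk, cc]

noncomputable def SN (N : ℕ) : PowerSeries ℚ := ∑ k ∈ Finset.range (N+1), C (R := ℚ) (cc k) * (X * Ds)^k

lemma coeff_SN (N n : ℕ) :
    coeff (R := ℚ) n (SN Ds N) = ∑ k ∈ Finset.range (N+1), cc k * coeff (R := ℚ) n ((X * Ds)^k) := by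
  rw [SN, map_sum]
  apply Finset.sum_congr rfl
  intro k _
  rw [coeff_C_mul]

lemma coeff_S_agree (N n : ℕ) (h : n ≤ N) :
    coeff (R := ℚ) n (psComp Cseries (X * Ds)) = coeff (R := ℚ) n (SN Ds N) := by
  rw [coeff_S_eq, coeff_SN]
  apply Finset.sum_subset
  · intro k hk
    simp only [Finset.mem_range] at hk ⊢
    omega
  · intro k _ hk
    simp only [Finset.mem_range] at hk
    rw [coeff_u_pow_vanish Ds k n (by omega), mul_zero]

lemma theta_u_pow (k : ℕ) :
    theta ((X * Ds)^k) * (X * Ds) = C (R := ℚ) (k:ℚ) * ((X * Ds)^k * theta (X * Ds)) := by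
  induction k with
  | zero =>
    have h1 : theta ((X * Ds)^0) = 0 := by
      ext n
      rw [pow_zero, coeff_theta, PowerSeries.coeff_one]
      by_cases h : n = 0 <;> simp [h]
    rw [h1]
    simp
  | succ k ih =>
    have h2 : theta ((X*Ds)^(k+1)) = theta ((X*Ds)^k) * (X*Ds) + (X*Ds)^k * theta (X*Ds) := by
      rw [pow_succ, theta_mul]
    rw [h2, add_mul, ih]
    have hcast : (C (R := ℚ) ((k:ℚ)+1)) = C (R := ℚ) (k:ℚ) + 1 := by
      rw [map_add, map_one]
    push_cast
    rw [hcast]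
    ring

noncomputable def SN2 (N : ℕ) : PowerSeries ℚ :=
  ∑ k ∈ Finset.range (N+1), C (R := ℚ) ((k:ℚ) * cc k) * (X * Ds)^k

lemma u_theta_SN (N : ℕ) :
    (X * Ds) * theta (SN Ds N) = theta (X * Ds) * SN2 Ds N := by
  rw [SN, SN2, theta_sum, Finset.mul_sum, Finset.mul_sum]
  apply Finset.sum_congr rfl
  intro k _
  rw [theta_C_mul]
  have h := theta_u_pow Ds k
  calc (X * Ds) * (C (R := ℚ) (cc k) * theta ((X*Ds)^k))
      = C (R := ℚ) (cc k) * (theta ((X*Ds)^k) * (X * Ds)) := by ring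
    _ = C (R := ℚ) (cc k) * (C (R := ℚ) (k:ℚ) * ((X * Ds)^k * theta (X * Ds))) := by rw [h]
    _ = theta (X * Ds) * (C (R := ℚ) ((k:ℚ) * cc k) * (X * Ds)^k) := by
        rw [map_mul]
        ring

lemma X_dvd_R (N : ℕ) :
    (X : PowerSeries ℚ)^(N+1) ∣
      (SN2 Ds N - SN Ds N - SN Ds N * SN2 Ds N) := by
  classical
  set u : PowerSeries ℚ := X * Ds with hu
  have hprod : SN Ds N * SN2 Ds N
      = ∑ p ∈ Finset.range (N+1) ×ˢ Finset.range (N+1),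
          C (R := ℚ) (cc p.1 * ((p.2:ℚ) * cc p.2)) * u^(p.1+p.2) := by
    rw [SN, SN2, Finset.sum_mul_sum, Finset.sum_product]
    apply Finset.sum_congr rfl
    intro i _
    apply Finset.sum_congr rfl
    intro j _
    simp only [map_mul, pow_add]
    ring
  set g : ℕ × ℕ → PowerSeries ℚ := fun p => C (R := ℚ) (cc p.1 * ((p.2:ℚ) * cc p.2)) * u^(p.1+p.2)
    with hg
  have hsplit : Finset.range (N+1) ×ˢ Finset.range (N+1)
      = ((Finset.range (N+1) ×ˢ Finset.range (N+1)).filter (fun p => p.1 + p.2 ≤ N))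
        ∪ ((Finset.range (N+1) ×ˢ Finset.range (N+1)).filter (fun p => ¬ (p.1 + p.2 ≤ N))) :=
    (Finset.filter_union_filter_not_eq _ _).symm
  have hdisj : Disjoint
      ((Finset.range (N+1) ×ˢ Finset.range (N+1)).filter (fun p => p.1 + p.2 ≤ N))
      ((Finset.range (N+1) ×ˢ Finset.range (N+1)).filter (fun p => ¬ (p.1 + p.2 ≤ N))) :=
    Finset.disjoint_filter_filter_not _ _ _
  have hbiUnion : ((Finset.range (N+1) ×ˢ Finset.range (N+1)).filter (fun p => p.1 + p.2 ≤ N))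
      = (Finset.range (N+1)).biUnion (fun m => Finset.HasAntidiagonal.antidiagonal m) := by
    ext p
    simp only [Finset.mem_filter, Finset.mem_product, Finset.mem_range, Finset.mem_biUnion,
      Finset.HasAntidiagonal.mem_antidiagonal]
    constructor
    · rintro ⟨⟨h1, h2⟩, h3⟩
      exact ⟨p.1 + p.2, by omega, rfl⟩
    · rintro ⟨m, hm, hpm⟩
      omega
  have hlow : ∑ p ∈ ((Finset.range (N+1) ×ˢ Finset.range (N+1)).filter
        (fun p => p.1 + p.2 ≤ N)), g p
      = SN2 Ds N - SN Ds N := by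
    rw [hbiUnion]
    rw [Finset.sum_biUnion]
    · have hinner : ∀ m ∈ Finset.range (N+1),
          ∑ p ∈ Finset.HasAntidiagonal.antidiagonal m, g p = C (R := ℚ) (((m:ℚ) - 1) * cc m) * u^m := by
        intro m _
        have : ∑ p ∈ Finset.HasAntidiagonal.antidiagonal m, g p
            = C (R := ℚ) (∑ p ∈ Finset.HasAntidiagonal.antidiagonal m, cc p.1 * ((p.2:ℚ) * cc p.2)) * u^m := by
          rw [map_sum, Finset.sum_mul]
          apply Finset.sum_congr rfl
          intro p hp
          have hpm : p.1 + p.2 = m := Finset.HasAntidiagonal.mem_antidiagonal.mp hp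
          rw [hg]
          simp only
          rw [hpm]
        rw [this]
        congr 2
        have := cc_rec m
        rw [← this]
        apply Finset.sum_congr rfl
        intro p _
        ring
      rw [Finset.sum_congr rfl hinner]
      rw [SN2, SN, ← Finset.sum_sub_distrib]
      apply Finset.sum_congr rfl
      intro m _
      rw [← sub_mul, ← map_sub]
      congr 2
      ring
    · intro x _ y _ hxy
      simp only [Finset.disjoint_left, Finset.HasAntidiagonal.mem_antidiagonal]
      intro p hp1 hp2
      exact hxy (by omega)
  have hhigh : (X : PowerSeries ℚ)^(N+1) ∣
      ∑ p ∈ ((Finset.range (N+1) ×ˢ Finset.range (N+1)).filter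
        (fun p => ¬ (p.1 + p.2 ≤ N))), g p := by
    apply Finset.dvd_sum
    intro p hp
    obtain ⟨-, hgt⟩ := Finset.mem_filter.mp hp
    have h1 : (X : PowerSeries ℚ)^(N+1) ∣ u^(p.1+p.2) := by
      have hx : (X : PowerSeries ℚ)^(p.1+p.2) ∣ u^(p.1+p.2) :=
        pow_dvd_pow_of_dvd (dvd_mul_right X Ds) _
      exact dvd_trans (pow_dvd_pow X (by omega)) hx
    exact Dvd.dvd.mul_left h1 _
  have htotal : SN Ds N * SN2 Ds N
      = (SN2 Ds N - SN Ds N)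
        + ∑ p ∈ ((Finset.range (N+1) ×ˢ Finset.range (N+1)).filter
            (fun p => ¬ (p.1 + p.2 ≤ N))), g p := by
    have hPN := Finset.sum_filter_add_sum_filter_not
      (Finset.range (N+1) ×ˢ Finset.range (N+1)) (fun p => p.1 + p.2 ≤ N) g
    rw [hprod, ← hPN, hlow]
  have : SN2 Ds N - SN Ds N - SN Ds N * SN2 Ds N
      = - ∑ p ∈ ((Finset.range (N+1) ×ˢ Finset.range (N+1)).filter
          (fun p => ¬ (p.1 + p.2 ≤ N))), g p := by
    rw [htotal]; ring
  rw [this]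
  exact dvd_neg.mpr hhigh

end Sside

lemma agree_mul (n : ℕ) (f f' g g' : PowerSeries ℚ)
    (hf : ∀ m ≤ n, coeff (R := ℚ) m f = coeff (R := ℚ) m f')
    (hg : ∀ m ≤ n, coeff (R := ℚ) m g = coeff (R := ℚ) m g') :
    ∀ m ≤ n, coeff (R := ℚ) m (f * g) = coeff (R := ℚ) m (f' * g') := by
  intro m hm
  rw [PowerSeries.coeff_mul, PowerSeries.coeff_mul]
  apply Finset.sum_congr rfl
  intro p hp
  have hps : p.1 + p.2 = m := Finset.HasAntidiagonal.mem_antidiagonal.mp hp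
  rw [hf p.1 (by omega), hg p.2 (by omega)]

lemma agree_theta (n : ℕ) (f f' : PowerSeries ℚ)
    (hf : ∀ m ≤ n, coeff (R := ℚ) m f = coeff (R := ℚ) m f') :
    ∀ m ≤ n, coeff (R := ℚ) m (theta f) = coeff (R := ℚ) m (theta f') := by
  intro m hm
  rw [coeff_theta, coeff_theta, hf m hm]

section Sside2

variable (Ds : PowerSeries ℚ)

lemma E_SN_vanish (N n : ℕ) (h : n ≤ N) :
    coeff (R := ℚ) n (Ds * theta (SN Ds N)
      - (Ds * SN Ds N + SN Ds N * theta Ds + Ds * SN Ds N * theta (SN Ds N))) = 0 := by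
  have h1 : (X * Ds) * theta (SN Ds N) = theta (X * Ds) * SN2 Ds N := u_theta_SN Ds N
  have h2 : theta (X * Ds) = X * Ds + X * theta Ds := by
    rw [theta_mul, theta_X]
  have hXE : X * (Ds * theta (SN Ds N)
        - (Ds * SN Ds N + SN Ds N * theta Ds + Ds * SN Ds N * theta (SN Ds N)))
      = theta (X * Ds) * (SN2 Ds N - SN Ds N - SN Ds N * SN2 Ds N) := by
    linear_combination (1 - SN Ds N) * h1 + SN Ds N * h2
  have hdvd1 : (X:PowerSeries ℚ)^(N+1) ∣ (SN2 Ds N - SN Ds N - SN Ds N * SN2 Ds N) :=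
    X_dvd_R Ds N
  have hXθu : (X:PowerSeries ℚ) ∣ theta (X * Ds) := by
    rw [PowerSeries.X_dvd_iff]
    have : coeff (R := ℚ) 0 (theta (X * Ds)) = 0 := by
      rw [coeff_theta]; simp
    rwa [← coeff_zero_eq_constantCoeff_apply]
  have hdvd2 : (X:PowerSeries ℚ) * X^(N+1) ∣ X * (Ds * theta (SN Ds N)
      - (Ds * SN Ds N + SN Ds N * theta Ds + Ds * SN Ds N * theta (SN Ds N))) := by
    rw [hXE]
    obtain ⟨w, hw⟩ := hXθu
    obtain ⟨v, hv⟩ := hdvd1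
    exact ⟨w * v, by rw [hw, hv]; ring⟩
  have hXne : (X:PowerSeries ℚ) ≠ 0 := X_ne_zero
  have hdvd3 : (X:PowerSeries ℚ)^(N+1) ∣ (Ds * theta (SN Ds N)
      - (Ds * SN Ds N + SN Ds N * theta Ds + Ds * SN Ds N * theta (SN Ds N))) :=
    (mul_dvd_mul_iff_left hXne).mp hdvd2
  exact PowerSeries.X_pow_dvd_iff.mp hdvd3 n (by omega)

lemma S_functional :
    Ds * theta (psComp Cseries (X * Ds))
      = Ds * psComp Cseries (X * Ds)
        + psComp Cseries (X * Ds) * theta Ds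
        + Ds * psComp Cseries (X * Ds) * theta (psComp Cseries (X * Ds)) := by
  ext n
  have hag : ∀ m ≤ n, coeff (R := ℚ) m (psComp Cseries (X * Ds)) = coeff (R := ℚ) m (SN Ds n) :=
    fun m hm => coeff_S_agree Ds n m hm
  have hrefl : ∀ m ≤ n, coeff (R := ℚ) m Ds = coeff (R := ℚ) m Ds := fun _ _ => rfl
  have hreflθ : ∀ m ≤ n, coeff (R := ℚ) m (theta Ds) = coeff (R := ℚ) m (theta Ds) := fun _ _ => rfl
  have hagθ := agree_theta n _ _ hag
  have e1 := agree_mul n Ds Ds _ _ hrefl hagθ n le_rfl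
  have e2 := agree_mul n Ds Ds _ _ hrefl hag n le_rfl
  have e3 := agree_mul n _ _ (theta Ds) (theta Ds) hag hreflθ n le_rfl
  have e4 := agree_mul n _ _ _ _ (agree_mul n Ds Ds _ _ hrefl hag) hagθ n le_rfl
  have hvan := E_SN_vanish Ds n n le_rfl
  rw [map_sub, map_add, map_add, sub_eq_zero] at hvan
  rw [map_add, map_add, e1, e2, e3, e4, hvan]

end Sside2

lemma coeff_mul_mk_swap (f g : ℕ → ℚ) (n : ℕ) :
    coeff (R := ℚ) n (PowerSeries.mk f * PowerSeries.mk g)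
      = ∑ k ∈ Finset.range (n+1), g k * f (n - k) := by
  rw [mul_comm, PowerSeries.coeff_mul, Finset.Nat.sum_antidiagonal_eq_sum_range_succ_mk]
  simp [coeff_mk]

lemma Icc_one_eq_insert_Icc_two (n : ℕ) (hn : 2 ≤ n) :
    Finset.Icc 1 n = insert 1 (Finset.Icc 2 n) := by
  ext x; simp [Finset.mem_Icc]; omega

/-- the composition identity `T = C(X·D)` in `ℚ⟦X⟧`; equivalently, for every
`n ≥ 1`, `t n = ∑_{k=1}^{n} (k^{k−1}/k!) · coeff_{X^n}((X·D)^k)`. -/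
theorem polya_eq_C_comp_XD
    (t d : ℕ → ℚ)
    (ht0 : t 0 = 0) (ht1 : t 1 = 1)
    (htrec : ∀ n : ℕ, 2 ≤ n →
      ((n : ℚ) - 1) * t n =
        ∑ i ∈ Finset.Icc 1 (n - 1), t (n - i) * ∑ m ∈ Nat.divisors i, (m : ℚ) * t m)
    (hd0 : d 0 = 1) (hd1 : d 1 = 0)
    (hdrec : ∀ n : ℕ, 2 ≤ n →
      (n : ℚ) * d n =
        ∑ i ∈ Finset.Icc 2 n, d (n - i) * ∑ m ∈ (Nat.divisors i).erase i, (m : ℚ) * t m) :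
    PowerSeries.mk t =
        psComp Cseries ((PowerSeries.X : PowerSeries ℚ) * PowerSeries.mk d) ∧
      ∀ n : ℕ, 1 ≤ n →
        t n = ∑ k ∈ Finset.Icc 1 n, ((k : ℚ) ^ (k - 1) / (k.factorial : ℚ)) *
          PowerSeries.coeff (R := ℚ) n
            (((PowerSeries.X : PowerSeries ℚ) * PowerSeries.mk d) ^ k) := by
  set Tps : PowerSeries ℚ := PowerSeries.mk t with hT
  set Dsp : PowerSeries ℚ := PowerSeries.mk d with hD
  set A : PowerSeries ℚ := PowerSeries.mk (fun i => ∑ m ∈ Nat.divisors i, (m:ℚ) * t m) with hA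
  set Bp : PowerSeries ℚ := PowerSeries.mk
    (fun i => ∑ m ∈ (Nat.divisors i).erase i, (m:ℚ) * t m) with hB
  have eq1 : theta Tps = Tps + Tps * A := by
    ext n
    rw [coeff_theta, map_add, hT, hA, coeff_mk, coeff_mul_mk_swap]
    rcases Nat.lt_or_ge n 2 with hn | hn
    · interval_cases n
      · simp [ht0]
      · simp [ht0, Nat.divisors_zero, Finset.sum_range_succ]
    · rw [range_succ_eq_insert_Icc, Finset.sum_insert (by simp)]
      have h00 : (∑ m ∈ Nat.divisors 0, (m:ℚ) * t m) * t (n - 0) = 0 := by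
        simp [Nat.divisors_zero]
      rw [h00, zero_add]
      have hn1 : n = (n - 1) + 1 := by omega
      rw [hn1, Icc_succ_top_insert, ← hn1, Finset.sum_insert (by simp [Finset.mem_Icc]; omega)]
      have htopz : (∑ m ∈ Nat.divisors n, (m:ℚ) * t m) * t (n - n) = 0 := by
        simp [ht0]
      rw [htopz, zero_add]
      have := htrec n hn
      have hswap : ∑ k ∈ Finset.Icc 1 (n-1), (∑ m ∈ Nat.divisors k, (m:ℚ) * t m) * t (n - k)
          = ∑ i ∈ Finset.Icc 1 (n - 1), t (n - i) * ∑ m ∈ Nat.divisors i, (m : ℚ) * t m := by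
        apply Finset.sum_congr rfl
        intro k _
        ring
      rw [hswap, ← this]
      ring
  have eq2 : theta Dsp = Dsp * Bp := by
    ext n
    rw [coeff_theta, hD, hB, coeff_mk, coeff_mul_mk_swap]
    rcases Nat.lt_or_ge n 2 with hn | hn
    · interval_cases n
      · simp
      · simp [hd1, Finset.sum_range_succ, Nat.divisors_one]
    · rw [range_succ_eq_insert_Icc, Finset.sum_insert (by simp)]
      have h00 : (∑ m ∈ (Nat.divisors 0).erase 0, (m:ℚ) * t m) * d (n - 0) = 0 := by
        simp [Nat.divisors_zero]
      rw [h00, zero_add]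
      rw [Icc_one_eq_insert_Icc_two n hn, Finset.sum_insert (by simp)]
      have h11 : (∑ m ∈ (Nat.divisors 1).erase 1, (m:ℚ) * t m) * d (n - 1) = 0 := by
        simp [Nat.divisors_one]
      rw [h11, zero_add]
      have := hdrec n hn
      have hswap : ∑ k ∈ Finset.Icc 2 n, (∑ m ∈ (Nat.divisors k).erase k, (m:ℚ) * t m) * d (n - k)
          = ∑ i ∈ Finset.Icc 2 n, d (n - i) * ∑ m ∈ (Nat.divisors i).erase i, (m : ℚ) * t m := by
        apply Finset.sum_congr rfl
        intro k _
        ring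
      rw [hswap, ← this]
  have eq3 : A = Bp + theta Tps := by
    ext n
    rw [map_add, coeff_theta, hA, hB, hT, coeff_mk, coeff_mk, coeff_mk]
    rcases Nat.eq_zero_or_pos n with hn | hn
    · subst hn
      simp [Nat.divisors_zero]
    · have hmem : n ∈ Nat.divisors n := Nat.mem_divisors_self n (by omega)
      rw [← Finset.sum_erase_add _ _ hmem]
  have hTfun : Dsp * theta Tps = Dsp * Tps + Tps * theta Dsp + Dsp * Tps * theta Tps := by
    linear_combination Dsp * eq1 + (Dsp * Tps) * eq3 - Tps * eq2
  have hSfun := S_functional Dsp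
  have hDs0 : coeff (R := ℚ) 0 Dsp = 1 := by rw [hD, coeff_mk, hd0]
  have hT0 : coeff (R := ℚ) 0 Tps = 0 := by rw [hT, coeff_mk, ht0]
  have hS0 : coeff (R := ℚ) 0 (psComp Cseries (X * Dsp)) = 0 := by
    rw [coeff_S_eq]
    simp [cc]
  have hT1 : coeff (R := ℚ) 1 Tps = 1 := by rw [hT, coeff_mk, ht1]
  have hS1 : coeff (R := ℚ) 1 (psComp Cseries (X * Dsp)) = 1 := by
    rw [coeff_S_eq]
    rw [Finset.sum_range_succ, Finset.sum_range_succ, Finset.sum_range_zero]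
    have hc0 : cc 0 = 0 := by simp [cc]
    have hc1 : cc 1 = 1 := by simp [cc]
    rw [hc0, hc1, pow_one]
    have : coeff (R := ℚ) 1 (X * Dsp) = coeff (R := ℚ) 0 Dsp := coeff_succ_X_mul 0 Dsp
    rw [this, hDs0]
    ring
  have hmain : Tps = psComp Cseries (X * Dsp) :=
    uniq_solution Dsp Tps (psComp Cseries (X * Dsp)) hDs0 hTfun hSfun hT0 hS0
      (by rw [hT1, hS1])
  constructor
  · exact hmain
  · intro n hn
    have hcoeff : t n = coeff (R := ℚ) n (psComp Cseries (X * Dsp)) := by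
      rw [← hmain, hT, coeff_mk]
    rw [hcoeff, coeff_S_eq]
    rw [range_succ_eq_insert_Icc, Finset.sum_insert (by simp)]
    have hc0 : cc 0 = 0 := by simp [cc]
    rw [hc0, zero_mul, zero_add]
    apply Finset.sum_congr rfl
    intro k hk
    obtain ⟨hk1, _⟩ := Finset.mem_Icc.mp hk
    rw [cc, if_neg (by omega : ¬ k = 0)]
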